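/- Let q ≥ 1 be an integer and let α, β be real numbers such that α/(2π) is irrational and β ∉ {mα + 2πk : m, k ∈ ℤ}. Let φ, ρ : ℝ/2πℤ → ℂ be continuous functions. Then φ solves the cyclotonic equation Σ_{k=0}^{q−1} e^{ikβ/q} φ(θ + (q−k−1)α/q) = ρ(θ) for all θ ∈ ℝ/2πℤ if and only if φ solves the twisted cohomological equation φ(θ + α) − e^{iβ} φ(θ) = ρ(θ + α/q) − e^{iβ/q} ρ(θ) for all θ ∈ ℝ/2πℤ. -/

import Mathlib

open MeasureTheory Complex Finset AddCircle

section helpers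

variable {T : ℝ} [hT : Fact (0 < T)]

lemma my_fourier_apply_add (n : ℤ) (x y : AddCircle T) :
    fourier n (x + y) = fourier n x * fourier n y := by
  simp [fourier_apply, smul_add, AddCircle.toCircle_add]

lemma my_fourier_neg_neg (n : ℤ) (a : AddCircle T) :
    fourier (-n) (-a) = fourier n a := by
  simp [fourier_apply]

lemma my_fourierCoeff_comp_add (g : AddCircle T → ℂ) (a : AddCircle T) (n : ℤ) :
    fourierCoeff (fun x => g (x + a)) n = fourier n a * fourierCoeff g n := by
  have key : (∫ x : AddCircle T, fourier (-n) x • g (x + a) ∂haarAddCircle)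
      = fourier n a * ∫ x : AddCircle T, fourier (-n) x • g x ∂haarAddCircle := by
    have h1 : (∫ x : AddCircle T,
        (fun y => (fourier n a : ℂ) * (fourier (-n) y • g y)) (x + a) ∂haarAddCircle)
        = ∫ x : AddCircle T,
          (fun y => (fourier n a : ℂ) * (fourier (-n) y • g y)) x ∂haarAddCircle :=
      integral_add_right_eq_self (μ := haarAddCircle)
        (fun y => (fourier n a : ℂ) * (fourier (-n) y • g y)) a
    have h2 : ∀ x : AddCircle T,
        (fourier n a : ℂ) * (fourier (-n) (x + a) • g (x + a)) = fourier (-n) x • g (x + a) := by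
      intro x
      have : (fourier n a : ℂ) * fourier (-n) (x + a) = fourier (-n) x := by
        rw [my_fourier_apply_add]
        have hinv : (fourier n a : ℂ) * fourier (-n) a = 1 := by
          rw [← fourier_add]; simp [fourier_zero]
        linear_combination (fourier (-n) x : ℂ) * hinv
      calc (fourier n a : ℂ) * (fourier (-n) (x + a) • g (x + a))
          = ((fourier n a : ℂ) * fourier (-n) (x + a)) * g (x + a) := by
            simp [smul_eq_mul, mul_assoc]
        _ = fourier (-n) x • g (x + a) := by rw [this]; simp [smul_eq_mul]
    calc (∫ x : AddCircle T, fourier (-n) x • g (x + a) ∂haarAddCircle)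
        = ∫ x : AddCircle T,
            (fun y => (fourier n a : ℂ) * (fourier (-n) y • g y)) (x + a) ∂haarAddCircle := by
          simp only []
          congr 1
          ext x
          exact (h2 x).symm
      _ = ∫ x : AddCircle T, (fourier n a : ℂ) * (fourier (-n) x • g x) ∂haarAddCircle := h1
      _ = fourier n a * ∫ x : AddCircle T, fourier (-n) x • g x ∂haarAddCircle :=
          integral_const_mul _ _
  simp only [fourierCoeff]
  rw [key]

lemma my_continuous_eq_zero (g : C(AddCircle T, ℂ)) (h : ∀ n : ℤ, fourierCoeff (⇑g) n = 0) :
    ∀ x, g x = 0 := by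
  have h1 : fourierBasis.repr (ContinuousMap.toLp (E := ℂ) 2 haarAddCircle ℂ g) = 0 := by
    ext n
    rw [fourierBasis_repr, fourierCoeff_toLp]
    simpa using h n
  have h2 : (ContinuousMap.toLp (E := ℂ) 2 haarAddCircle ℂ g) = 0 := by
    apply fourierBasis.repr.injective
    simpa using h1
  have h3 : g = 0 := by
    apply ContinuousMap.toLp_injective (p := 2) (𝕜 := ℂ) haarAddCircle
    rw [h2]
    simp
  intro x; rw [h3]; rfl

end helpers

theorem cyclotonic_iff_twisted
    (q : ℕ) (hq : 1 ≤ q) (α β : ℝ)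
    (hα : Irrational (α / (2 * Real.pi)))
    (hβ : ∀ m k : ℤ, β ≠ m * α + 2 * Real.pi * k)
    (φ ρ : AddCircle (2 * Real.pi) → ℂ)
    (hφ : Continuous φ) (hρ : Continuous ρ) :
    (∀ θ : AddCircle (2 * Real.pi),
        ∑ k ∈ Finset.range q,
          Complex.exp ((k : ℂ) * (β : ℂ) / (q : ℂ) * Complex.I) *
            φ (θ + ((((q : ℝ) - k - 1) * α / q : ℝ) : AddCircle (2 * Real.pi)))
        = ρ θ)
      ↔
    (∀ θ : AddCircle (2 * Real.pi),
        φ (θ + ((α : ℝ) : AddCircle (2 * Real.pi)))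
            - Complex.exp ((β : ℂ) * Complex.I) * φ θ
        = ρ (θ + ((α / q : ℝ) : AddCircle (2 * Real.pi)))
            - Complex.exp ((β : ℂ) / (q : ℂ) * Complex.I) * ρ θ) := by
  have hπ : (0:ℝ) < 2 * Real.pi := by positivity
  haveI : Fact (0 < 2 * Real.pi) := ⟨hπ⟩
  have hqR : (q:ℝ) ≠ 0 := by positivity
  have hqC : (q:ℂ) ≠ 0 := by exact_mod_cast hqR
  set lam : ℂ := Complex.exp ((β : ℂ) / (q : ℂ) * Complex.I) with hlam
  set a : AddCircle (2 * Real.pi) := ((α / q : ℝ) : AddCircle (2 * Real.pi)) with ha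
  set c : ℕ → AddCircle (2 * Real.pi) :=
    fun j => (((j : ℝ) * (α / q) : ℝ) : AddCircle (2 * Real.pi)) with hc
  have hc0 : c 0 = 0 := by simp [hc]
  have hmk : ∀ x y : ℝ, x = y → ((x : ℝ) : AddCircle (2 * Real.pi)) = ((y : ℝ) : AddCircle (2 * Real.pi)) := fun x y h => by rw [h]
  have hcsucc : ∀ j : ℕ, a + c j = c (j + 1) := by
    intro j
    simp only [hc, ha]
    rw [← QuotientAddGroup.mk_add]
    apply hmk
    push_cast
    ring
  have hcq : c q = ((α : ℝ) : AddCircle (2 * Real.pi)) := by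
    simp only [hc]
    apply hmk
    field_simp
  -- coefficients
  have hcoef : ∀ k : ℕ, Complex.exp ((k : ℂ) * (β : ℂ) / (q : ℂ) * Complex.I) = lam ^ k := by
    intro k
    have e : (k : ℂ) * (β : ℂ) / (q : ℂ) * Complex.I = (k : ℂ) * ((β : ℂ) / (q : ℂ) * Complex.I) := by ring
    rw [hlam, e, Complex.exp_nat_mul]
  -- argument rewriting for k < q
  have harg : ∀ k ∈ Finset.range q,
      ((((q : ℝ) - k - 1) * α / q : ℝ) : AddCircle (2 * Real.pi)) = c (q - 1 - k) := by
    intro k hk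
    rw [Finset.mem_range] at hk
    simp only [hc]
    apply hmk
    have h1 : q - 1 - k = q - (k + 1) := by omega
    have h2 : ((q - (k + 1) : ℕ) : ℝ) = (q : ℝ) - (k + 1) := by
      rw [Nat.cast_sub hk]
      push_cast
      ring
    rw [h1, h2]
    push_cast
    ring
  set S : AddCircle (2 * Real.pi) → ℂ :=
    fun θ => ∑ k ∈ Finset.range q, lam ^ k * φ (θ + c (q - 1 - k)) with hS
  have hSeq : ∀ θ, (∑ k ∈ Finset.range q,
      Complex.exp ((k : ℂ) * (β : ℂ) / (q : ℂ) * Complex.I) *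
        φ (θ + ((((q : ℝ) - k - 1) * α / q : ℝ) : AddCircle (2 * Real.pi)))) = S θ := by
    intro θ
    apply Finset.sum_congr rfl
    intro k hk
    rw [hcoef k, harg k hk]
  -- key telescoping identity
  have hkey : ∀ θ, S (θ + a) - lam * S θ
      = φ (θ + c q) - lam ^ q * φ θ := by
    intro θ
    have h1 : S (θ + a) = ∑ k ∈ Finset.range q, lam ^ k * φ (θ + c (q - k)) := by
      apply Finset.sum_congr rfl
      intro k hk
      rw [Finset.mem_range] at hk
      have e2 : q - 1 - k + 1 = q - k := by omega
      rw [add_assoc, hcsucc, e2]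
    have h2 : lam * S θ = ∑ k ∈ Finset.range q, lam ^ (k + 1) * φ (θ + c (q - (k + 1))) := by
      rw [hS, Finset.mul_sum]
      apply Finset.sum_congr rfl
      intro k hk
      have : q - 1 - k = q - (k + 1) := by omega
      rw [this]; ring
    rw [h1, h2, ← Finset.sum_sub_distrib]
    rw [Finset.sum_range_sub' (fun j => lam ^ j * φ (θ + c (q - j)))]
    simp [hc0]
  -- spectral condition
  have hspec : ∀ n : ℤ, fourier n a ≠ lam := by
    intro n hne
    have h2π : ((2:ℂ) * (Real.pi : ℂ)) ≠ 0 := by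
      simp [Real.pi_ne_zero]
    have hfa : (fourier n a : ℂ) = Complex.exp ((n : ℂ) * (α / q : ℝ) * Complex.I) := by
      rw [ha, fourier_coe_apply]
      congr 1
      push_cast
      rw [div_eq_iff h2π]
      ring
    rw [hfa, hlam] at hne
    have : Complex.exp ((n : ℂ) * (α / q : ℝ) * Complex.I - (β : ℂ) / (q : ℂ) * Complex.I) = 1 := by
      rw [Complex.exp_sub, hne, div_self (Complex.exp_ne_zero _)]
    rw [Complex.exp_eq_one_iff] at this
    obtain ⟨m, hm⟩ := this
    have hm' : ((n : ℂ) * (α / q : ℝ) - (β : ℂ) / (q : ℂ)) * Complex.I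
        = ((m : ℂ) * (2 * Real.pi)) * Complex.I := by
      push_cast
      push_cast at hm
      linear_combination hm
    have hm2 : (n : ℂ) * (α / q : ℝ) - (β : ℂ) / (q : ℂ) = (m : ℂ) * (2 * Real.pi) :=
      mul_right_cancel₀ Complex.I_ne_zero hm'
    have hreal : (n : ℝ) * (α / q) - β / q = (m : ℝ) * (2 * Real.pi) := by
      exact_mod_cast hm2
    have e1 : ((n:ℝ) * (α / q) - β / q) * q = (n:ℝ) * α - β := by
      field_simp
    have hreal' : (n:ℝ) * α - β = (m:ℝ) * (2 * Real.pi) * q := by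
      rw [← e1, hreal]
    apply hβ n (-(m * q))
    push_cast
    linear_combination -hreal'
  constructor
  · -- cyclotonic → twisted
    intro hcyc θ
    have hρS : ∀ θ', S θ' = ρ θ' := fun θ' => by rw [← hSeq θ', hcyc θ']
    have hb : Complex.exp ((β : ℂ) * Complex.I) = lam ^ q := by
      have e : (β : ℂ) * Complex.I = (q : ℂ) * ((β : ℂ) / (q : ℂ) * Complex.I) := by
        field_simp
      rw [hlam, e, Complex.exp_nat_mul]
    rw [← hcq, hb]
    rw [← hkey θ, hρS (θ + a), hρS θ, ha]
  · -- twisted → cyclotonic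
    intro htw
    have hb : Complex.exp ((β : ℂ) * Complex.I) = lam ^ q := by
      have e : (β : ℂ) * Complex.I = (q : ℂ) * ((β : ℂ) / (q : ℂ) * Complex.I) := by
        field_simp
      rw [hlam, e, Complex.exp_nat_mul]
    have hcontS : Continuous S := by
      apply continuous_finset_sum
      intro k _
      exact continuous_const.mul (hφ.comp (continuous_id.add continuous_const))
    set g : C(AddCircle (2 * Real.pi), ℂ) := ⟨fun θ => S θ - ρ θ, hcontS.sub hρ⟩ with hg
    have hgrel : ∀ θ, g (θ + a) = lam * g θ := by
      intro θ
      have ht := htw θ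
      rw [← hcq, hb] at ht
      have := hkey θ
      simp only [hg, ContinuousMap.coe_mk]
      rw [ha] at *
      calc S (θ + ((α / ↑q : ℝ) : AddCircle (2 * Real.pi)))
            - ρ (θ + ((α / ↑q : ℝ) : AddCircle (2 * Real.pi)))
          = lam * S θ + (φ (θ + c q) - lam ^ q * φ θ)
            - ρ (θ + ((α / ↑q : ℝ) : AddCircle (2 * Real.pi))) := by rw [← this]; ring
        _ = lam * (S θ - ρ θ) := by rw [ht]; ring
    have hcoeff0 : ∀ n : ℤ, fourierCoeff (⇑g) n = 0 := by
      intro n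
      have e1 : fourierCoeff (fun x => g (x + a)) n = fourier n a * fourierCoeff (⇑g) n :=
        my_fourierCoeff_comp_add (⇑g) a n
      have e2 : (fun x => g (x + a)) = fun x => lam * g x := by
        ext x; exact hgrel x
      rw [e2, fourierCoeff.const_mul] at e1
      by_contra hne
      exact hspec n (mul_right_cancel₀ hne e1.symm)
    have hg0 := my_continuous_eq_zero g hcoeff0
    intro θ
    rw [hSeq θ]
    have := hg0 θ
    simp only [hg, ContinuousMap.coe_mk] at this
    linear_combination this
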